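/- Let $t$ be a complex number, $t \ne 1$, and let $w_1, \dots, w_N$ be pairwise distinct complex numbers. Then $\sum_{l=1}^N \prod_{k \ne l} \frac{w_l - t w_k}{w_l - w_k} = \frac{t^N - 1}{t - 1}$. -/

import Mathlib

open Finset Polynomial

theorem stmt4 (t : ℂ) (ht : t ≠ 1) (N : ℕ) (w : Fin N → ℂ)
    (hw : Function.Injective w) :
    ∑ l, ∏ k ∈ Finset.univ.erase l, (w l - t * w k) / (w l - w k) =
      (t ^ N - 1) / (t - 1) := by
  cases N with
  | zero => simp
  | succ M =>
  have htm1 : t - 1 ≠ 0 := sub_ne_zero.mpr ht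
  have h1mt : (1 : ℂ) - t ≠ 0 := sub_ne_zero.mpr (Ne.symm ht)
  set c : Fin (M+1) → ℂ := fun l => ∏ k ∈ univ.erase l, (w l - t * w k) / (w l - w k) with hc
  have hwne : ∀ {l k : Fin (M+1)}, k ≠ l → w l - w k ≠ 0 := by
    intro l k h
    exact sub_ne_zero.mpr fun he => h (hw he.symm)
  have hckey : ∀ l, c l * ∏ k ∈ univ.erase l, (w l - w k)
      = ∏ k ∈ univ.erase l, (w l - t * w k) := by
    intro l
    rw [hc, ← prod_mul_distrib]
    exact prod_congr rfl fun k hk => div_mul_cancel₀ _ (hwne (mem_erase.mp hk).1)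
  set A : ℂ[X] := ∏ k, (X - C (t * w k)) with hA
  set B : ℂ[X] := ∏ k, (X - C (w k)) with hB
  set S : ℂ[X] := ∑ l, C (c l) * (X * ∏ k ∈ univ.erase l, (X - C (w k))) with hS
  set R : ℂ[X] := A - C (t ^ (M+1)) * B - C (1 - t) * S with hR
  -- evaluation at the w j
  have hevalw : ∀ j, R.eval (w j) = 0 := by
    intro j
    have hSe : S.eval (w j) = c j * (w j * ∏ k ∈ univ.erase j, (w j - w k)) := by
      rw [hS, eval_finset_sum]
      rw [Finset.sum_eq_single j]
      · simp [eval_prod]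
      · intro l _ hlj
        have hz : (∏ k ∈ univ.erase l, (w j - w k)) = 0 :=
          prod_eq_zero (mem_erase.mpr ⟨hlj.symm, mem_univ j⟩) (by simp)
        simp [eval_prod, hz]
      · simp
    have hAe : A.eval (w j) = (w j - t * w j) * ∏ k ∈ univ.erase j, (w j - t * w k) := by
      rw [hA, ← Finset.mul_prod_erase univ _ (mem_univ j)]
      simp [eval_prod]
    have hBe : B.eval (w j) = 0 := by
      rw [hB, eval_prod]
      exact prod_eq_zero (mem_univ j) (by simp)
    rw [hR]
    simp only [eval_sub, eval_mul, eval_C, hAe, hBe, hSe, ← hckey j]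
    ring
  -- evaluation at 0
  have heval0 : R.eval 0 = 0 := by
    have hAe : A.eval 0 = ∏ k, (0 - t * w k) := by simp [hA, eval_prod]
    have hBe : B.eval 0 = ∏ k, (0 - w k) := by simp [hB, eval_prod]
    have hSe : S.eval 0 = 0 := by
      rw [hS, eval_finset_sum]
      refine Finset.sum_eq_zero fun l _ => by simp
    have key : (∏ k, (0 - t * w k)) = t ^ (M+1) * ∏ k, (0 - w k) := by
      have h : ∀ k : Fin (M+1), (0 : ℂ) - t * w k = t * (0 - w k) := fun k => by ring
      rw [Finset.prod_congr rfl fun k _ => h k, Finset.prod_mul_distrib]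
      simp
    rw [hR]
    simp only [eval_sub, eval_mul, eval_C, hAe, hBe, hSe, key]
    ring
  -- degree facts
  have hPl : ∀ l : Fin (M+1), (∏ k ∈ univ.erase l, (X - C (w k))).natDegree = M := by
    intro l
    rw [natDegree_prod_of_monic _ _ fun k _ => monic_X_sub_C _]
    simp [Finset.card_erase_of_mem]
  have hPlm : ∀ l : Fin (M+1), (∏ k ∈ univ.erase l, (X - C (w k))).Monic :=
    fun l => monic_prod_of_monic _ _ fun k _ => monic_X_sub_C _
  have hAdeg : A.natDegree = M + 1 := by
    rw [hA, natDegree_prod_of_monic _ _ fun k _ => monic_X_sub_C _]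
    simp only [natDegree_X_sub_C, Finset.sum_const, card_univ, Fintype.card_fin, smul_eq_mul,
      mul_one]
  have hBdeg : B.natDegree = M + 1 := by
    rw [hB, natDegree_prod_of_monic _ _ fun k _ => monic_X_sub_C _]
    simp only [natDegree_X_sub_C, Finset.sum_const, card_univ, Fintype.card_fin, smul_eq_mul,
      mul_one]
  have hAm : A.Monic := monic_prod_of_monic _ _ fun k _ => monic_X_sub_C _
  have hBm : B.Monic := monic_prod_of_monic _ _ fun k _ => monic_X_sub_C _
  have hSdeg : S.natDegree ≤ M + 1 := by
    refine natDegree_sum_le_of_forall_le _ _ fun l _ => ?_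
    calc (C (c l) * (X * ∏ k ∈ univ.erase l, (X - C (w k)))).natDegree
        ≤ (C (c l)).natDegree + (X * ∏ k ∈ univ.erase l, (X - C (w k))).natDegree :=
          natDegree_mul_le
      _ ≤ 0 + (X.natDegree + (∏ k ∈ univ.erase l, (X - C (w k))).natDegree) := by
          gcongr
          · simp
          · exact natDegree_mul_le
      _ ≤ M + 1 := by rw [hPl l, natDegree_X]; omega
  have hRdeg : R.natDegree ≤ M + 1 := by
    rw [hR]
    refine le_trans (natDegree_sub_le _ _) ?_
    refine max_le (le_trans (natDegree_sub_le _ _) ?_) ?_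
    · exact max_le hAdeg.le (le_trans natDegree_mul_le (by simp [hBdeg]))
    · exact le_trans natDegree_mul_le (by simp [hSdeg])
  -- R = X * R₁
  have hXdvd : X ∣ R := X_dvd_iff.mpr (by rwa [coeff_zero_eq_eval_zero])
  obtain ⟨R₁, hR1⟩ := hXdvd
  have hRzero : R = 0 := by
    by_cases hR10 : R₁ = 0
    · rw [hR1, hR10, mul_zero]
    · have hdeg1 : R₁.natDegree < M + 1 := by
        have hx := natDegree_mul (X_ne_zero (R := ℂ)) hR10
        rw [← hR1, natDegree_X] at hx
        omega
      have heval1 : ∀ j, R₁.eval (w j) = 0 := by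
        intro j
        by_cases hwj : w j = 0
        · -- need R.coeff 1 = 0
          have hcoeff1 : R.coeff 1 = 0 := by
            have hAc : A.coeff 1 = ∏ k ∈ univ.erase j, (0 - t * w k) := by
              have hfact : A = X * ∏ k ∈ univ.erase j, (X - C (t * w k)) := by
                rw [hA, ← Finset.mul_prod_erase univ _ (mem_univ j), hwj]
                simp
              rw [hfact, coeff_X_mul, coeff_zero_eq_eval_zero, eval_prod]
              simp
            have hBc : B.coeff 1 = ∏ k ∈ univ.erase j, (0 - w k) := by
              have hfact : B = X * ∏ k ∈ univ.erase j, (X - C (w k)) := by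
                rw [hB, ← Finset.mul_prod_erase univ _ (mem_univ j), hwj]
                simp
              rw [hfact, coeff_X_mul, coeff_zero_eq_eval_zero, eval_prod]
              simp
            have hSc : S.coeff 1 = c j * ∏ k ∈ univ.erase j, (0 - w k) := by
              rw [hS, finset_sum_coeff]
              rw [Finset.sum_eq_single j]
              · rw [coeff_C_mul, coeff_X_mul, coeff_zero_eq_eval_zero, eval_prod]
                simp
              · intro l _ hlj
                rw [coeff_C_mul, coeff_X_mul, coeff_zero_eq_eval_zero, eval_prod]
                have hz : (∏ k ∈ univ.erase l, eval 0 (X - C (w k))) = 0 := by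
                  refine prod_eq_zero (mem_erase.mpr ⟨hlj.symm, mem_univ j⟩) ?_
                  simp [hwj]
                rw [hz, mul_zero]
              · simp
            have hcj : c j = t ^ M := by
              simp only [hc]
              have h : ∀ k ∈ univ.erase j, (w j - t * w k) / (w j - w k) = t := by
                intro k hk
                have hk0 : w k ≠ 0 := by
                  intro h0
                  exact (mem_erase.mp hk).1 (hw (h0.trans hwj.symm))
                rw [hwj]
                field_simp
                ring
              rw [Finset.prod_congr rfl h, Finset.prod_const, Finset.card_erase_of_mem
                (mem_univ j), card_univ, Fintype.card_fin, Nat.add_sub_cancel]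
            have hAQ : (∏ k ∈ univ.erase j, (0 - t * w k))
                = t ^ M * ∏ k ∈ univ.erase j, (0 - w k) := by
              have h : ∀ k ∈ univ.erase j, (0 : ℂ) - t * w k = t * (0 - w k) :=
                fun k _ => by ring
              rw [Finset.prod_congr rfl h, Finset.prod_mul_distrib, Finset.prod_const,
                Finset.card_erase_of_mem (mem_univ j), card_univ, Fintype.card_fin,
                Nat.add_sub_cancel]
            rw [hR]
            simp only [coeff_sub, coeff_C_mul, hAc, hBc, hSc, hAQ, hcj]
            ring
          have hco : R₁.coeff 0 = 0 := by
            have := coeff_X_mul R₁ 0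
            rw [← hR1] at this
            rw [← this, hcoeff1]
          rw [hwj, ← coeff_zero_eq_eval_zero, hco]
        · have h := hevalw j
          rw [hR1, eval_mul, eval_X] at h
          exact (mul_eq_zero.mp h).resolve_left hwj
      have hz : R₁ = 0 :=
        eq_zero_of_natDegree_lt_card_of_eval_eq_zero R₁ hw heval1 (by simpa using hdeg1)
      rw [hR1, hz, mul_zero]
  -- extract coefficient M+1
  have hAcN : A.coeff (M+1) = 1 := by
    have := hAm.coeff_natDegree
    rwa [hAdeg] at this
  have hBcN : B.coeff (M+1) = 1 := by
    have := hBm.coeff_natDegree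
    rwa [hBdeg] at this
  have hScN : S.coeff (M+1) = ∑ l, c l := by
    rw [hS, finset_sum_coeff]
    refine Finset.sum_congr rfl fun l _ => ?_
    rw [coeff_C_mul, coeff_X_mul]
    have h1 : (∏ k ∈ univ.erase l, (X - C (w k))).coeff M = 1 := by
      have := (hPlm l).coeff_natDegree
      rwa [hPl l] at this
    rw [h1, mul_one]
  have hfin : (0 : ℂ) = 1 - t ^ (M+1) - (1 - t) * ∑ l, c l := by
    have h := congrArg (fun p : ℂ[X] => p.coeff (M+1)) hRzero
    simp only [hR, coeff_sub, coeff_C_mul, hAcN, hBcN, hScN, coeff_zero] at h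
    rw [← h]
    ring
  rw [eq_div_iff htm1]
  linear_combination -hfin
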